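/- Take n = 2, σ = (1,2,2) and σ' = (2,1,2), so that σσ' = (2,2,4) and σ, σ' are not coprime. Then the canonical map f : P(2,2,4) → {(z', z) ∈ P(2,1,2) × P(1,2,2) : e(1/σ')(z') = e(1/σ)(z) in ℂP²} given by f(w) = (e(σ'/σσ')(w), e(σ/σσ')(w)) is not injective. Hence the coprimality hypothesis in the statement that the square of e-maps is a pullback cannot be omitted. -/

import Mathlib

noncomputable section

/-- The unit sphere in `ℂ^m` (the sphere `S^{2m-1}`). -/
abbrev Sph (m : ℕ) : Type := {z : Fin m → ℂ // ∑ i, ‖z i‖ ^ 2 = 1}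

/-- The relation on the sphere whose quotient is the weighted projective space `P(χ)`:
`z ∼ w` iff `w = t ·_χ z` for some unimodular `t`. -/
def wRel (m : ℕ) (χ : Fin m → ℕ) (z w : Sph m) : Prop :=
  ∃ t : ℂ, ‖t‖ = 1 ∧ ∀ i, (w : Fin m → ℂ) i = t ^ χ i * (z : Fin m → ℂ) i

/-- The weighted projective space `P(χ)`, with the quotient topology. -/
abbrev WP (m : ℕ) (χ : Fin m → ℕ) : Type := Quot (wRel m χ)

/-- The class `[z]_χ` of a point of the sphere in `P(χ)`. -/
def wpMk (m : ℕ) (χ : Fin m → ℕ) (z : Sph m) : WP m χ := Quot.mk _ z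

/-- `s(χ,ω)`: the least positive integer `s` with `ω i ∣ s * χ i` for all `i`. -/
def sVal (m : ℕ) (χ ω : Fin m → ℕ) : ℕ := sInf {s : ℕ | 0 < s ∧ ∀ i, ω i ∣ s * χ i}

/-- The exponents `d i = s(χ,ω)·χ i/ω i` of the map `e(χ/ω)`. -/
def dExp (m : ℕ) (χ ω : Fin m → ℕ) (i : Fin m) : ℕ := sVal m χ ω * χ i / ω i

/-- `IsNorm m χ v w` says that `w` is the normalisation `N_χ(v)`, i.e. `w` lies on the
sphere and has the form `(λ^{χ_0} v_0, …)` for some real `λ > 0`. -/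
def IsNorm (m : ℕ) (χ : Fin m → ℕ) (v : Fin m → ℂ) (w : Sph m) : Prop :=
  ∃ l : ℝ, 0 < l ∧ ∀ i, (w : Fin m → ℂ) i = (l : ℂ) ^ χ i * v i

/-- Coordinatewise powers of a point of the sphere. -/
def powVec (m : ℕ) (d : Fin m → ℕ) (z : Sph m) : Fin m → ℂ :=
  fun i => (z : Fin m → ℂ) i ^ d i

/-- `IsEMap m χ ω e` says that `e` is the canonical map `e(χ/ω) : P(ω) → P(χ)`:
it is continuous and sends `[z]_ω` to `[N_χ(z_0^{d_0}, …, z_n^{d_n})]_χ`. -/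
def IsEMap (m : ℕ) (χ ω : Fin m → ℕ) (e : WP m ω → WP m χ) : Prop :=
  Continuous e ∧ ∀ z w : Sph m,
    IsNorm m χ (powVec m (dExp m χ ω) z) w → e (wpMk m ω z) = wpMk m χ w

section Statement12Aux

lemma wRel_equiv (m : ℕ) (χ : Fin m → ℕ) : Equivalence (wRel m χ) := by
  constructor
  · intro z; exact ⟨1, by simp, fun i => by simp⟩
  · rintro z w ⟨t, ht, h⟩
    have ht0 : t ≠ 0 := by intro h0; simp [h0] at ht
    refine ⟨t⁻¹, by simp [ht], fun i => ?_⟩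
    rw [h i]
    field_simp
    rw [mul_assoc, ← mul_pow, one_div_mul_cancel ht0, one_pow, mul_one]
  · rintro x y z ⟨t, ht, h⟩ ⟨t', ht', h'⟩
    refine ⟨t' * t, by simp [ht, ht'], fun i => ?_⟩
    rw [h' i, h i, mul_pow]; ring

lemma sval1 : sVal 3 ![2, 1, 2] ![2, 2, 4] = 2 := by
  unfold sVal
  have hmem : (2 : ℕ) ∈ {s : ℕ | 0 < s ∧ ∀ i, (![2,2,4] : Fin 3 → ℕ) i ∣ s * ![2,1,2] i} := by
    refine ⟨by norm_num, ?_⟩; decide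
  set s := sInf {s : ℕ | 0 < s ∧ ∀ i, (![2,2,4] : Fin 3 → ℕ) i ∣ s * ![2,1,2] i} with hs
  have hle : s ≤ 2 := Nat.sInf_le hmem
  obtain ⟨hpos, hdvd⟩ := Nat.sInf_mem (⟨2, hmem⟩ : Set.Nonempty _)
  have h1 : (2:ℕ) ∣ s := by have := hdvd 1; simpa using this
  omega

lemma sval2 : sVal 3 ![1, 2, 2] ![2, 2, 4] = 2 := by
  unfold sVal
  have hmem : (2 : ℕ) ∈ {s : ℕ | 0 < s ∧ ∀ i, (![2,2,4] : Fin 3 → ℕ) i ∣ s * ![1,2,2] i} := by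
    refine ⟨by norm_num, ?_⟩; decide
  set s := sInf {s : ℕ | 0 < s ∧ ∀ i, (![2,2,4] : Fin 3 → ℕ) i ∣ s * ![1,2,2] i} with hs
  have hle : s ≤ 2 := Nat.sInf_le hmem
  obtain ⟨hpos, hdvd⟩ := Nat.sInf_mem (⟨2, hmem⟩ : Set.Nonempty _)
  have h1 : (2:ℕ) ∣ s := by have := hdvd 0; simpa using this
  omega

lemma dexp1 : dExp 3 ![2, 1, 2] ![2, 2, 4] = ![2, 1, 1] := by
  funext i
  fin_cases i <;> simp [dExp, sval1]

lemma dexp2 : dExp 3 ![1, 2, 2] ![2, 2, 4] = ![1, 2, 1] := by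
  funext i
  fin_cases i <;> simp [dExp, sval2]

/-- `s = √(1/2)`. -/
def ssR : ℝ := Real.sqrt (1/2)

/-- `l = √(√5 - 1)`. -/
def llR : ℝ := Real.sqrt (Real.sqrt 5 - 1)

lemma ssR_pos : 0 < ssR := Real.sqrt_pos.mpr (by norm_num)

lemma ssR_sq : ssR ^ 2 = 1/2 := Real.sq_sqrt (by norm_num)

lemma sqrt5_sq : Real.sqrt 5 ^ 2 = 5 := Real.sq_sqrt (by norm_num)

lemma sqrt5_gt : 1 < Real.sqrt 5 := by
  nlinarith [Real.sqrt_nonneg 5, sqrt5_sq]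

lemma llR_pos : 0 < llR := Real.sqrt_pos.mpr (by linarith [sqrt5_gt])

lemma llR_sq : llR ^ 2 = Real.sqrt 5 - 1 := Real.sq_sqrt (by linarith [sqrt5_gt])

lemma key_eq : (llR ^ 2 * ssR ^ 2) ^ 2 + (llR * ssR) ^ 2 = 1 := by
  have e : llR ^ 2 * ssR ^ 2 = (Real.sqrt 5 - 1)/2 := by rw [llR_sq, ssR_sq]; ring
  rw [e, mul_pow, llR_sq, ssR_sq]
  linear_combination (1/4) * sqrt5_sq

/-- The point `z = (s, s, 0)` on the sphere. -/
def zPt : Sph 3 :=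
  ⟨![(ssR : ℂ), (ssR : ℂ), 0], by
    rw [Fin.sum_univ_three]
    simp [Complex.norm_real, abs_of_pos ssR_pos]
    nlinarith [ssR_sq]⟩

/-- The point `z' = (-s, s, 0)` on the sphere. -/
def zPt' : Sph 3 :=
  ⟨![-(ssR : ℂ), (ssR : ℂ), 0], by
    rw [Fin.sum_univ_three]
    simp [Complex.norm_real, abs_of_pos ssR_pos]
    nlinarith [ssR_sq]⟩

/-- Normalisation target for `e1` on both `z` and `z'`. -/
def w1Pt : Sph 3 :=
  ⟨![((llR ^ 2 * ssR ^ 2 : ℝ) : ℂ), ((llR * ssR : ℝ) : ℂ), 0], by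
    rw [Fin.sum_univ_three]
    simp [Complex.norm_real, abs_mul, abs_of_pos llR_pos, abs_of_pos ssR_pos, abs_pow, sq_abs]
    linear_combination key_eq⟩

/-- Normalisation target for `e2` on `z`. -/
def w2Pt : Sph 3 :=
  ⟨![((llR * ssR : ℝ) : ℂ), ((llR ^ 2 * ssR ^ 2 : ℝ) : ℂ), 0], by
    rw [Fin.sum_univ_three]
    simp [Complex.norm_real, abs_mul, abs_of_pos llR_pos, abs_of_pos ssR_pos, abs_pow, sq_abs]
    linear_combination key_eq⟩

/-- Normalisation target for `e2` on `z'`. -/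
def w2Pt' : Sph 3 :=
  ⟨![-((llR * ssR : ℝ) : ℂ), ((llR ^ 2 * ssR ^ 2 : ℝ) : ℂ), 0], by
    rw [Fin.sum_univ_three]
    simp [Complex.norm_real, abs_mul, abs_of_pos llR_pos, abs_of_pos ssR_pos, abs_pow, sq_abs]
    linear_combination key_eq⟩

lemma isNorm_e1_z : IsNorm 3 ![2, 1, 2] (powVec 3 (dExp 3 ![2, 1, 2] ![2, 2, 4]) zPt) w1Pt := by
  rw [dexp1]
  refine ⟨llR, llR_pos, fun i => ?_⟩
  fin_cases i <;> simp [powVec, w1Pt, zPt] <;> push_cast <;> ring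

lemma isNorm_e1_z' : IsNorm 3 ![2, 1, 2] (powVec 3 (dExp 3 ![2, 1, 2] ![2, 2, 4]) zPt') w1Pt := by
  rw [dexp1]
  refine ⟨llR, llR_pos, fun i => ?_⟩
  fin_cases i <;> simp [powVec, w1Pt, zPt'] <;> push_cast <;> ring

lemma isNorm_e2_z : IsNorm 3 ![1, 2, 2] (powVec 3 (dExp 3 ![1, 2, 2] ![2, 2, 4]) zPt) w2Pt := by
  rw [dexp2]
  refine ⟨llR, llR_pos, fun i => ?_⟩
  fin_cases i <;> simp [powVec, w2Pt, zPt] <;> push_cast <;> ring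

lemma isNorm_e2_z' : IsNorm 3 ![1, 2, 2] (powVec 3 (dExp 3 ![1, 2, 2] ![2, 2, 4]) zPt') w2Pt' := by
  rw [dexp2]
  refine ⟨llR, llR_pos, fun i => ?_⟩
  fin_cases i <;> simp [powVec, w2Pt', zPt'] <;> push_cast <;> ring

lemma w2_rel : wRel 3 ![1, 2, 2] w2Pt w2Pt' := by
  refine ⟨-1, by simp, fun i => ?_⟩
  fin_cases i <;> simp [w2Pt, w2Pt'] <;> ring

lemma not_rel_z : ¬ wRel 3 ![2, 2, 4] zPt zPt' := by
  rintro ⟨t, ht, h⟩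
  have h0 := h 0
  have h1 := h 1
  simp [zPt, zPt'] at h0 h1
  have hs : (ssR : ℂ) ≠ 0 := by
    exact_mod_cast (Complex.ofReal_ne_zero.mpr (ne_of_gt ssR_pos))
  have ht2 : t ^ 2 = 1 := mul_right_cancel₀ hs (by linear_combination -h1)
  rw [ht2, one_mul] at h0
  have : (ssR : ℂ) = 0 := by linear_combination (-1/2 : ℂ) * h0
  exact hs this

end Statement12Aux


/-- For `σ = (1,2,2)` and `σ' = (2,1,2)` (which are not coprime), with
`σσ' = (2,2,4)`, the canonical map from `P(2,2,4)` to the pullback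
`{(z', z) ∈ P(2,1,2) × P(1,2,2) : e(1/σ')(z') = e(1/σ)(z)}`, i.e. the map
`w ↦ (e(σ'/σσ')(w), e(σ/σσ')(w))`, is not injective: the coprimality hypothesis in the
pullback statement cannot be omitted. -/
theorem statement12
    (e1 : WP 3 ![2, 2, 4] → WP 3 ![2, 1, 2])
    (h1 : IsEMap 3 ![2, 1, 2] ![2, 2, 4] e1)
    (e2 : WP 3 ![2, 2, 4] → WP 3 ![1, 2, 2])
    (h2 : IsEMap 3 ![1, 2, 2] ![2, 2, 4] e2)
    (q' : WP 3 ![2, 1, 2] → WP 3 (fun _ => 1))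
    (hq' : IsEMap 3 (fun _ => 1) ![2, 1, 2] q')
    (q : WP 3 ![1, 2, 2] → WP 3 (fun _ => 1))
    (hq : IsEMap 3 (fun _ => 1) ![1, 2, 2] q) :
    ¬ Function.Injective (fun w : WP 3 ![2, 2, 4] => (e1 w, e2 w)) := by
  intro hinj
  have he1 : e1 (wpMk 3 ![2, 2, 4] zPt) = e1 (wpMk 3 ![2, 2, 4] zPt') := by
    rw [h1.2 zPt w1Pt isNorm_e1_z, h1.2 zPt' w1Pt isNorm_e1_z']
  have he2 : e2 (wpMk 3 ![2, 2, 4] zPt) = e2 (wpMk 3 ![2, 2, 4] zPt') := by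
    rw [h2.2 zPt w2Pt isNorm_e2_z, h2.2 zPt' w2Pt' isNorm_e2_z']
    exact Quot.sound w2_rel
  have heq := hinj (a₁ := wpMk 3 ![2, 2, 4] zPt) (a₂ := wpMk 3 ![2, 2, 4] zPt')
    (Prod.ext he1 he2)
  have hrel : wRel 3 ![2, 2, 4] zPt zPt' :=
    ((wRel_equiv 3 ![2, 2, 4]).eqvGen_iff).mp (Quot.eqvGen_exact heq)
  exact not_rel_z hrel
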